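/- A simple (injective) loop on a cylinder has winding coefficient 0, 1, or −1 around the periodic direction: if γ : S¹ → S¹ × ℝ is a continuous injective loop, and n ∈ ℤ is the degree of the composition of γ with the projection to S¹, then |n| ≤ 1. -/

import Mathlib

set_option maxHeartbeats 1000000

open Set Complex

noncomputable section SCLD

namespace SCLD

/-- `ℓ` is a continuous logarithm of `φ` on `[0,1]`. -/
def IsLiftOn (φ ℓ : ℝ → ℂ) : Prop :=
  ContinuousOn ℓ (Icc 0 1) ∧ ∀ t ∈ Icc (0:ℝ) 1, Complex.exp (ℓ t) = φ t

lemma re_pos_of_abs_sub_one_lt {z : ℂ} (h : ‖z - 1‖ < 1) : 0 < z.re := by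
  have h1 : |(z - 1).re| ≤ ‖z - 1‖ := Complex.abs_re_le_norm _
  have : (z - 1).re = z.re - 1 := by simp
  rw [this] at h1
  have := abs_le.mp h1
  linarith

/-- Existence of continuous logarithms for nonvanishing continuous maps on `[0,1]`. -/
lemma lift_exists (φ : ℝ → ℂ) (hφ : Continuous φ) (h0 : ∀ t ∈ Icc (0:ℝ) 1, φ t ≠ 0) :
    ∃ ℓ : ℝ → ℂ, IsLiftOn φ ℓ := by
  obtain ⟨tm, htm, hm'⟩ := isCompact_Icc.exists_isMinOn (nonempty_Icc.mpr zero_le_one)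
    ((continuous_norm.comp hφ).continuousOn)
  have hm : ∀ y ∈ Icc (0:ℝ) 1, ‖φ tm‖ ≤ ‖φ y‖ := fun y hy => hm' hy
  set m := ‖φ tm‖ with hmdef
  have hmpos : 0 < m := norm_pos_iff.mpr (h0 tm htm)
  have UC := isCompact_Icc.uniformContinuousOn_of_continuous
    (hφ.continuousOn : ContinuousOn φ (Icc (0:ℝ) 1))
  rw [Metric.uniformContinuousOn_iff] at UC
  obtain ⟨δ, hδ, hUC⟩ := UC m hmpos
  obtain ⟨N, hN⟩ := exists_nat_gt (1/δ)
  set s : ℝ := 1/(N+1) with hsdef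
  have hNpos : (0:ℝ) < N + 1 := by positivity
  have hs : 0 < s := by positivity
  have hsδ : s < δ := by
    rw [hsdef, div_lt_iff₀ hNpos]
    have h1 : 1/δ < (N:ℝ) + 1 := lt_of_lt_of_le hN (by linarith)
    calc (1:ℝ) = δ * (1/δ) := by field_simp
    _ < δ * ((N:ℝ)+1) := by apply mul_lt_mul_of_pos_left h1 hδ
  have main : ∀ j : ℕ, j ≤ N+1 →
      ∃ ℓ : ℝ → ℂ, Continuous ℓ ∧ ∀ t ∈ Icc (0:ℝ) ((j:ℝ)*s), Complex.exp (ℓ t) = φ t := by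
    intro j
    induction j with
    | zero =>
      intro _
      refine ⟨fun _ => Complex.log (φ 0), continuous_const, ?_⟩
      intro t ht
      simp only [Nat.cast_zero, zero_mul] at ht
      have : t = 0 := le_antisymm ht.2 ht.1
      rw [this, Complex.exp_log (h0 0 (by constructor <;> norm_num))]
    | succ j IH =>
      intro hj
      obtain ⟨ℓ, hℓc, hℓ⟩ := IH (le_of_lt (Nat.lt_of_lt_of_le (Nat.lt_succ_self j) hj))
      set c : ℝ := (j:ℝ)*s with hcdef
      set c' : ℝ := ((j:ℝ)+1)*s with hc'def
      have hcc' : c ≤ c' := by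
        rw [hcdef, hc'def]; nlinarith
      have hc0 : 0 ≤ c := by positivity
      have hc'1 : c' ≤ 1 := by
        rw [hc'def, hsdef]
        rw [div_eq_inv_mul, ← mul_assoc, mul_one]
        have hj' : (j:ℝ) + 1 ≤ (N:ℝ) + 1 := by
          have := (Nat.cast_le (α := ℝ)).mpr hj; push_cast at this ⊢; linarith
        calc ((j:ℝ)+1) * ((N:ℝ)+1)⁻¹ ≤ ((N:ℝ)+1) * ((N:ℝ)+1)⁻¹ := by
              apply mul_le_mul_of_nonneg_right hj' (by positivity)
        _ = 1 := by field_simp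
      have hc1 : c ≤ 1 := le_trans hcc' hc'1
      have hcmem : c ∈ Icc (0:ℝ) 1 := ⟨hc0, hc1⟩
      set r : ℝ → ℂ := fun t => φ (max c (min t c')) / φ c with hrdef
      have hrc : Continuous r := by
        apply Continuous.div_const
        exact hφ.comp (continuous_const.max (continuous_id.min continuous_const))
      have humem : ∀ t : ℝ, max c (min t c') ∈ Icc c c' := by
        intro t
        constructor
        · exact le_max_left _ _
        · apply max_le hcc' (min_le_right _ _)
      have hrval : ∀ t : ℝ, ‖r t - 1‖ < 1 := by
        intro t
        set u := max c (min t c') with hudef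
        have hu : u ∈ Icc c c' := humem t
        have humem1 : u ∈ Icc (0:ℝ) 1 := ⟨le_trans hc0 hu.1, le_trans hu.2 hc'1⟩
        have hdist : dist u c < δ := by
          have h' : dist u c = u - c := by
            rw [Real.dist_eq]
            exact abs_of_nonneg (by linarith [hu.1])
          rw [h']
          have hss : c' - c = s := by rw [hcdef, hc'def]; ring
          linarith [hu.2]
        have h1 : ‖φ u - φ c‖ < m := by
          have := hUC u humem1 c hcmem hdist
          rwa [Complex.dist_eq] at this
        have h2 : m ≤ ‖φ c‖ := hm c hcmem
        have hφcne : φ c ≠ 0 := h0 c hcmem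
        have : r t - 1 = (φ u - φ c) / φ c := by
          rw [hrdef]; field_simp; rfl
        rw [this, norm_div]
        rw [div_lt_one (lt_of_lt_of_le hmpos h2)]
        exact lt_of_lt_of_le h1 h2
      have hrre : ∀ t, 0 < (r t).re := fun t => re_pos_of_abs_sub_one_lt (hrval t)
      have hrne : ∀ t, r t ≠ 0 := by
        intro t h
        have := hrre t
        rw [h] at this
        simp at this
      set ℓ' : ℝ → ℂ := fun t => ℓ (min t c) + Complex.log (r t) with hℓ'def
      have hℓ'c : Continuous ℓ' := by
        apply Continuous.add
        · exact hℓc.comp (continuous_id.min continuous_const)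
        · rw [continuous_iff_continuousAt]
          intro t
          exact (continuousAt_clog (Complex.mem_slitPlane_iff.mpr (Or.inl (hrre t)))).comp hrc.continuousAt
      refine ⟨ℓ', hℓ'c, ?_⟩
      intro t ht
      push_cast at ht
      have ht' : t ∈ Icc (0:ℝ) c' := by rwa [hc'def]
      rcases le_or_gt t c with htc | htc
      · have h1 : min t c = t := min_eq_left htc
        have h2 : max c (min t c') = c := by
          rw [min_eq_left (le_trans htc hcc'), max_eq_left htc]
        have h3 : r t = 1 := by
          rw [hrdef]; simp only [h2]; rw [div_self (h0 c hcmem)]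
        rw [hℓ'def]
        simp only [h1, h3, Complex.log_one, add_zero]
        exact hℓ t ⟨ht'.1, htc⟩
      · have h1 : min t c = c := min_eq_right (le_of_lt htc)
        have h2 : max c (min t c') = t := by
          rw [min_eq_left ht'.2, max_eq_right (le_of_lt htc)]
        rw [hℓ'def]
        simp only [h1]
        rw [Complex.exp_add, Complex.exp_log (hrne t), hℓ c ⟨hc0, le_refl c⟩, hrdef]
        simp only [h2]
        have hφc := h0 c hcmem
        field_simp
  obtain ⟨ℓ, hℓc, hℓ⟩ := main (N+1) (le_refl _)
  refine ⟨ℓ, hℓc.continuousOn, ?_⟩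
  intro t ht
  apply hℓ
  have : ((N:ℝ)+1)*s = 1 := by rw [hsdef]; field_simp
  push_cast
  rw [this]
  exact ht

/-- Uniqueness of the lift gap. -/
lemma lift_gap_unique {φ ℓ ℓ' : ℝ → ℂ} (h : IsLiftOn φ ℓ) (h' : IsLiftOn φ ℓ') :
    ℓ 1 - ℓ 0 = ℓ' 1 - ℓ' 0 := by
  have key : ∀ t ∈ Icc (0:ℝ) 1, ∃ k : ℤ, ℓ t - ℓ' t = (k:ℂ) * (2 * Real.pi * I) := by
    intro t ht
    have hne : φ t ≠ 0 := by rw [← h.2 t ht]; exact Complex.exp_ne_zero _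
    have : Complex.exp (ℓ t - ℓ' t) = 1 := by
      rw [Complex.exp_sub, h.2 t ht, h'.2 t ht, div_self hne]
    exact Complex.exp_eq_one_iff.mp this
  set κ : ℝ → ℝ := fun t => (ℓ t - ℓ' t).im with hκdef
  have hκc : ContinuousOn κ (Icc 0 1) :=
    Complex.continuous_im.comp_continuousOn (h.1.sub h'.1)
  have hval : ∀ t ∈ Icc (0:ℝ) 1, ∃ k : ℤ, κ t = (k:ℝ) * (2 * Real.pi) := by
    intro t ht
    obtain ⟨k, hk⟩ := key t ht
    refine ⟨k, ?_⟩
    rw [hκdef]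
    have := congrArg Complex.im hk
    simpa using this
  have hmem0 : (0:ℝ) ∈ Icc (0:ℝ) 1 := ⟨le_refl _, zero_le_one⟩
  have hmem1 : (1:ℝ) ∈ Icc (0:ℝ) 1 := ⟨zero_le_one, le_refl _⟩
  have hκeq : κ 1 = κ 0 := by
    by_contra hne
    obtain ⟨a, ha⟩ := hval 0 hmem0
    obtain ⟨b, hb⟩ := hval 1 hmem1
    have hab : a ≠ b := by
      intro heq; apply hne; rw [ha, hb, heq]
    have hπ : (0:ℝ) < Real.pi := Real.pi_pos
    -- a target value strictly between, an odd multiple of π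
    have absurd : ∀ y : ℝ, y ∈ κ '' (Icc (0:ℝ) 1) → y ≠ (2*(min a b)+1) * Real.pi := by
      rintro y ⟨t, ht, rfl⟩ heq
      obtain ⟨k, hk⟩ := hval t ht
      rw [hk] at heq
      have : ((2*k : ℤ) : ℝ) * Real.pi = ((2*(min a b)+1 : ℤ) : ℝ) * Real.pi := by
        push_cast at heq ⊢; linarith
      have := mul_right_cancel₀ (ne_of_gt hπ) this
      have := Int.cast_injective this
      omega
    set y₀ : ℝ := (2*(min a b)+1) * Real.pi with hy₀
    rcases lt_or_gt_of_ne hab with hlt | hgt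
    · -- a < b : κ 0 < κ 1, min = a
      have h1 : κ 0 < y₀ := by
        rw [ha, hy₀, min_eq_left (le_of_lt hlt)]; push_cast; nlinarith
      have h2 : y₀ < κ 1 := by
        rw [hb, hy₀, min_eq_left (le_of_lt hlt)]
        have : (a:ℝ) + 1 ≤ b := by exact_mod_cast hlt
        push_cast; nlinarith
      have := intermediate_value_Icc zero_le_one hκc
      have hy : y₀ ∈ κ '' (Icc (0:ℝ) 1) := this ⟨le_of_lt h1, le_of_lt h2⟩
      exact absurd y₀ hy rfl
    · -- b < a : κ 1 < κ 0, min = b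
      have h1 : κ 1 < y₀ := by
        rw [hb, hy₀, min_eq_right (le_of_lt hgt)]; push_cast; nlinarith
      have h2 : y₀ < κ 0 := by
        rw [ha, hy₀, min_eq_right (le_of_lt hgt)]
        have : (b:ℝ) + 1 ≤ a := by exact_mod_cast hgt
        push_cast; nlinarith
      have := intermediate_value_Icc' zero_le_one hκc
      have hy : y₀ ∈ κ '' (Icc (0:ℝ) 1) := this ⟨le_of_lt h1, le_of_lt h2⟩
      exact absurd y₀ hy rfl
  -- conclude
  obtain ⟨a, ha⟩ := key 0 hmem0
  obtain ⟨b, hb⟩ := key 1 hmem1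
  have hd : ℓ 1 - ℓ' 1 = ℓ 0 - ℓ' 0 := by
    rw [ha, hb]
    have him : κ 1 = κ 0 := hκeq
    rw [hκdef] at him
    simp only at him
    rw [ha, hb] at him
    have ha' : ((a:ℂ) * (2 * Real.pi * I)).im = (a:ℝ) * (2*Real.pi) := by simp
    have hb' : ((b:ℂ) * (2 * Real.pi * I)).im = (b:ℝ) * (2*Real.pi) := by simp
    rw [ha', hb'] at him
    have : (b:ℝ) = a := by
      have hπ : (0:ℝ) < Real.pi := Real.pi_pos
      nlinarith
    have : b = a := by exact_mod_cast this
    rw [this]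
  linear_combination hd

/-- Gap invariance under small (pointwise sub-modulus) perturbation of a loop. -/
lemma lift_gap_close {φ ψ ℓ ℓ' : ℝ → ℂ} (hℓ : IsLiftOn φ ℓ) (hℓ' : IsLiftOn ψ ℓ')
    (hφ0 : ∀ t ∈ Icc (0:ℝ) 1, φ t ≠ 0)
    (hclose : ∀ t ∈ Icc (0:ℝ) 1, ‖ψ t - φ t‖ < ‖φ t‖)
    (hloopφ : φ 0 = φ 1) (hloopψ : ψ 0 = ψ 1) :
    ℓ' 1 - ℓ' 0 = ℓ 1 - ℓ 0 := by
  have hmem0 : (0:ℝ) ∈ Icc (0:ℝ) 1 := ⟨le_refl _, zero_le_one⟩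
  have hmem1 : (1:ℝ) ∈ Icc (0:ℝ) 1 := ⟨zero_le_one, le_refl _⟩
  set r : ℝ → ℂ := fun t => Complex.exp (ℓ' t - ℓ t) with hrdef
  have hrval : ∀ t ∈ Icc (0:ℝ) 1, r t = ψ t / φ t := by
    intro t ht
    rw [hrdef]
    simp only
    rw [Complex.exp_sub, hℓ.2 t ht, hℓ'.2 t ht]
  have hrre : ∀ t ∈ Icc (0:ℝ) 1, 0 < (r t).re := by
    intro t ht
    apply re_pos_of_abs_sub_one_lt
    rw [hrval t ht]
    have hne := hφ0 t ht
    have hrw : ψ t / φ t - 1 = (ψ t - φ t)/φ t := by field_simp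
    rw [hrw, norm_div, div_lt_one (norm_pos_iff.mpr hne)]
    exact hclose t ht
  have hrcont : ContinuousOn r (Icc 0 1) :=
    Complex.continuous_exp.comp_continuousOn (hℓ'.1.sub hℓ.1)
  set L : ℝ → ℂ := fun t => ℓ t + Complex.log (r t) with hLdef
  have hrne : ∀ t ∈ Icc (0:ℝ) 1, r t ≠ 0 := by
    intro t ht h
    have := hrre t ht
    rw [h] at this
    simp at this
  have hLlift : IsLiftOn ψ L := by
    constructor
    · apply hℓ.1.add
      intro t ht
      exact (continuousAt_clog (Complex.mem_slitPlane_iff.mpr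
        (Or.inl (hrre t ht)))).comp_continuousWithinAt (hrcont t ht)
    · intro t ht
      rw [hLdef]
      simp only
      rw [Complex.exp_add, Complex.exp_log (hrne t ht), hℓ.2 t ht, hrval t ht]
      have := hφ0 t ht
      field_simp
  have hkey := lift_gap_unique hℓ' hLlift
  rw [hkey, hLdef]
  simp only
  have hr01 : r 1 = r 0 := by
    rw [hrval 1 hmem1, hrval 0 hmem0, hloopφ, hloopψ]
  rw [hr01]
  ring

/-- Homotopy invariance of the lift gap. -/
lemma homotopy_gap (G : ℝ → ℝ → ℂ) (hG : Continuous fun p : ℝ × ℝ => G p.1 p.2)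
    (hG0 : ∀ s ∈ Icc (0:ℝ) 1, ∀ t ∈ Icc (0:ℝ) 1, G s t ≠ 0)
    (hloop : ∀ s ∈ Icc (0:ℝ) 1, G s 0 = G s 1)
    {ℓ₀ ℓ₁ : ℝ → ℂ} (h₀ : IsLiftOn (G 0) ℓ₀) (h₁ : IsLiftOn (G 1) ℓ₁) :
    ℓ₁ 1 - ℓ₁ 0 = ℓ₀ 1 - ℓ₀ 0 := by
  set K : Set (ℝ×ℝ) := Icc (0:ℝ) 1 ×ˢ Icc (0:ℝ) 1 with hKdef
  have hKc : IsCompact K := isCompact_Icc.prod isCompact_Icc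
  have hKne : K.Nonempty :=
    ⟨(0,0), ⟨⟨le_refl _, zero_le_one⟩, ⟨le_refl _, zero_le_one⟩⟩⟩
  obtain ⟨pm, hpm, hmins⟩ := hKc.exists_isMinOn hKne
    ((continuous_norm.comp hG).continuousOn)
  set m := ‖G pm.1 pm.2‖ with hmdef
  have hmpos : 0 < m := norm_pos_iff.mpr (hG0 pm.1 hpm.1 pm.2 hpm.2)
  have hmle : ∀ s ∈ Icc (0:ℝ) 1, ∀ t ∈ Icc (0:ℝ) 1, m ≤ ‖G s t‖ := by
    intro s hs t ht
    exact hmins (⟨hs, ht⟩ : ((s,t) : ℝ×ℝ) ∈ K)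
  have UC := hKc.uniformContinuousOn_of_continuous hG.continuousOn
  rw [Metric.uniformContinuousOn_iff] at UC
  obtain ⟨δ, hδ, hUC⟩ := UC m hmpos
  obtain ⟨N, hN⟩ := exists_nat_gt (1/δ)
  set st : ℝ := 1/(N+1) with hstdef
  have hNpos : (0:ℝ) < N + 1 := by positivity
  have hst : 0 < st := by positivity
  have hstδ : st < δ := by
    rw [hstdef, div_lt_iff₀ hNpos]
    have h1 : 1/δ < (N:ℝ) + 1 := lt_of_lt_of_le hN (by linarith)
    calc (1:ℝ) = δ * (1/δ) := by field_simp
    _ < δ * ((N:ℝ)+1) := by apply mul_lt_mul_of_pos_left h1 hδ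
  have hGs : ∀ s : ℝ, Continuous (G s) := fun s => hG.comp (Continuous.prodMk_right s)
  have lifts : ∀ s ∈ Icc (0:ℝ) 1, ∃ ℓ, IsLiftOn (G s) ℓ := fun s hs =>
    lift_exists _ (hGs s) (fun t ht => hG0 s hs t ht)
  have step : ∀ a ∈ Icc (0:ℝ) 1, ∀ b ∈ Icc (0:ℝ) 1, |b - a| < δ →
      ∀ (ℓa ℓb : ℝ → ℂ), IsLiftOn (G a) ℓa → IsLiftOn (G b) ℓb →
      ℓb 1 - ℓb 0 = ℓa 1 - ℓa 0 := by
    intro a ha b hb hab ℓa ℓb hℓa hℓb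
    apply lift_gap_close hℓa hℓb (fun t ht => hG0 a ha t ht) ?_ (hloop a ha) (hloop b hb)
    intro t ht
    have hd : dist ((b,t) : ℝ×ℝ) ((a,t) : ℝ×ℝ) < δ := by
      rw [Prod.dist_eq]
      simp only [dist_self]
      rw [max_eq_left dist_nonneg, Real.dist_eq]
      exact hab
    have h2 := hUC (b, t) ⟨hb, ht⟩ (a, t) ⟨ha, ht⟩ hd
    rw [Complex.dist_eq] at h2
    exact lt_of_lt_of_le h2 (hmle a ha t ht)
  have hjmem : ∀ j : ℕ, j ≤ N+1 → ((j:ℝ)*st) ∈ Icc (0:ℝ) 1 := by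
    intro j hj
    constructor
    · positivity
    · rw [hstdef, div_eq_inv_mul, ← mul_assoc, mul_one]
      have hj' : (j:ℝ) ≤ (N:ℝ) + 1 := by exact_mod_cast hj
      calc (j:ℝ) * ((N:ℝ)+1)⁻¹ ≤ ((N:ℝ)+1) * ((N:ℝ)+1)⁻¹ := by
            apply mul_le_mul_of_nonneg_right hj' (by positivity)
      _ = 1 := by field_simp
  have chain : ∀ j : ℕ, j ≤ N+1 → ∀ ℓj : ℝ → ℂ, IsLiftOn (G ((j:ℝ)*st)) ℓj →
      ℓj 1 - ℓj 0 = ℓ₀ 1 - ℓ₀ 0 := by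
    intro j
    induction j with
    | zero =>
      intro _ ℓj hℓj
      have h00 : ((0:ℕ):ℝ)*st = 0 := by norm_num
      rw [h00] at hℓj
      exact lift_gap_unique hℓj h₀
    | succ j IH =>
      intro hj ℓj hℓj
      have hjle : j ≤ N+1 := le_of_lt (Nat.lt_of_lt_of_le (Nat.lt_succ_self j) hj)
      obtain ⟨ℓa, hℓa⟩ := lifts _ (hjmem j hjle)
      have hdist : |((j+1:ℕ):ℝ)*st - (j:ℝ)*st| < δ := by
        have : ((j+1:ℕ):ℝ)*st - (j:ℝ)*st = st := by push_cast; ring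
        rw [this, abs_of_pos hst]
        exact hstδ
      have h1 := step _ (hjmem j hjle) _ (hjmem (j+1) hj) hdist ℓa ℓj hℓa hℓj
      rw [h1]
      exact IH hjle ℓa hℓa
  have hfin : ((N+1:ℕ):ℝ)*st = 1 := by
    rw [hstdef]
    push_cast
    field_simp
  have := chain (N+1) (le_refl _) ℓ₁ (by rw [hfin]; exact h₁)
  exact this

/-- A convex combination `(1-a)z + aw` with `0 < z.re`, `0 ≤ w.re`, `w ≠ 0` is nonzero. -/
lemma comb_ne_re {z w : ℂ} {a : ℝ} (hz : 0 < z.re) (hw : 0 ≤ w.re) (hwne : w ≠ 0)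
    (ha0 : 0 ≤ a) (ha1 : a ≤ 1) : ((1 - a : ℝ) : ℂ) * z + (a : ℂ) * w ≠ 0 := by
  rcases eq_or_lt_of_le ha1 with h1 | h1
  · intro h0
    apply hwne
    have e : ((1 - a : ℝ) : ℂ) * z + (a : ℂ) * w = w := by
      rw [h1]; push_cast; ring
    rwa [e] at h0
  · intro h0
    have hre : (((1 - a : ℝ) : ℂ) * z + (a : ℂ) * w).re = (1-a) * z.re + a * w.re := by
      simp [Complex.add_re, Complex.mul_re]
    rw [h0] at hre
    simp only [Complex.zero_re] at hre
    nlinarith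

lemma comb_ne_im {z w : ℂ} {a : ℝ} (hz : 0 < z.im) (hw : 0 ≤ w.im) (hwne : w ≠ 0)
    (ha0 : 0 ≤ a) (ha1 : a ≤ 1) : ((1 - a : ℝ) : ℂ) * z + (a : ℂ) * w ≠ 0 := by
  have h := comb_ne_re (z := -Complex.I * z) (w := -Complex.I * w) (a := a)
    (by simp [Complex.mul_re]; linarith) (by simp [Complex.mul_re]; linarith)
    (by simp [hwne, Complex.I_ne_zero]) ha0 ha1
  intro h0
  apply h
  rw [show ((1 - a : ℝ) : ℂ) * (-Complex.I * z) + (a : ℂ) * (-Complex.I * w)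
      = -Complex.I * (((1 - a : ℝ) : ℂ) * z + (a : ℂ) * w) by ring, h0, mul_zero]

lemma comb_ne_re_neg {z w : ℂ} {a : ℝ} (hz : z.re < 0) (hw : w.re ≤ 0) (hwne : w ≠ 0)
    (ha0 : 0 ≤ a) (ha1 : a ≤ 1) : ((1 - a : ℝ) : ℂ) * z + (a : ℂ) * w ≠ 0 := by
  have h := comb_ne_re (z := -z) (w := -w) (a := a)
    (by simp; linarith) (by simp; linarith) (by simp [hwne]) ha0 ha1
  intro h0
  apply h
  rw [show ((1 - a : ℝ) : ℂ) * (-z) + (a : ℂ) * (-w)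
      = -(((1 - a : ℝ) : ℂ) * z + (a : ℂ) * w) by ring, h0, neg_zero]

lemma comb_ne_im_neg {z w : ℂ} {a : ℝ} (hz : z.im < 0) (hw : w.im ≤ 0) (hwne : w ≠ 0)
    (ha0 : 0 ≤ a) (ha1 : a ≤ 1) : ((1 - a : ℝ) : ℂ) * z + (a : ℂ) * w ≠ 0 := by
  have h := comb_ne_im (z := -z) (w := -w) (a := a)
    (by simp; linarith) (by simp; linarith) (by simp [hwne]) ha0 ha1
  intro h0
  apply h
  rw [show ((1 - a : ℝ) : ℂ) * (-z) + (a : ℂ) * (-w)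
      = -(((1 - a : ℝ) : ℂ) * z + (a : ℂ) * w) by ring, h0, neg_zero]

lemma convex_half_mem {a x : ℝ} (ha : a ∈ Icc (0:ℝ) 1) (hx : x ∈ Icc (0:ℝ) 1) :
    (1 - a) * (1/2) + a * x ∈ Icc (0:ℝ) 1 := by
  constructor
  · linarith [mul_nonneg ha.1 hx.1, ha.2, mul_le_mul_of_nonneg_left hx.2 ha.1]
  · linarith [mul_nonneg ha.1 hx.1, ha.2, mul_le_mul_of_nonneg_left hx.2 ha.1]

/-- Poincaré–Miranda theorem on the unit square. -/
theorem poincare_miranda (f g : ℝ × ℝ → ℝ) (hf : Continuous f) (hg : Continuous g)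
    (hleft : ∀ y ∈ Icc (0:ℝ) 1, f (0, y) < 0) (hright : ∀ y ∈ Icc (0:ℝ) 1, 0 < f (1, y))
    (hbot : ∀ x ∈ Icc (0:ℝ) 1, g (x, 0) < 0) (htop : ∀ x ∈ Icc (0:ℝ) 1, 0 < g (x, 1)) :
    ∃ p : ℝ × ℝ, p ∈ Icc (0:ℝ) 1 ×ˢ Icc (0:ℝ) 1 ∧ f p = 0 ∧ g p = 0 := by
  by_contra hcon
  push_neg at hcon
  set Φ : ℝ × ℝ → ℂ := fun p => (f p : ℂ) + (g p : ℂ) * Complex.I with hΦdef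
  have hΦc : Continuous Φ :=
    (Complex.continuous_ofReal.comp hf).add
      ((Complex.continuous_ofReal.comp hg).mul continuous_const)
  have hΦre : ∀ p, (Φ p).re = f p := by intro p; simp [hΦdef]
  have hΦim : ∀ p, (Φ p).im = g p := by intro p; simp [hΦdef]
  have hΦ0 : ∀ p ∈ Icc (0:ℝ) 1 ×ˢ Icc (0:ℝ) 1, Φ p ≠ 0 := by
    intro p hp h0
    have h1 : f p = 0 := by rw [← hΦre p, h0]; simp
    have h2 : g p = 0 := by rw [← hΦim p, h0]; simp
    exact hcon p hp h1 h2
  -- clamping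
  set cl : ℝ → ℝ := fun z => max 0 (min 1 z) with hcldef
  have hclc : Continuous cl := continuous_const.max (continuous_const.min continuous_id)
  have hclmem : ∀ z, cl z ∈ Icc (0:ℝ) 1 :=
    fun z => ⟨le_max_left _ _, max_le zero_le_one (min_le_left _ _)⟩
  have hcl_eval : ∀ z, 0 ≤ z → z ≤ 1 → cl z = z := by
    intro z h0 h1
    rw [hcldef]; simp only
    rw [min_eq_right h1, max_eq_right h0]
  have hcl_hi : ∀ z, 1 ≤ z → cl z = 1 := by
    intro z h1
    rw [hcldef]; simp only
    rw [min_eq_left h1, max_eq_right zero_le_one]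
  have hcl_lo : ∀ z, z ≤ 0 → cl z = 0 := by
    intro z h0
    rw [hcldef]; simp only
    rw [min_eq_right (le_trans h0 zero_le_one), max_eq_left h0]
  -- boundary parametrization
  set bx : ℝ → ℝ := fun u => cl (2 - 4*u) + cl (4*u - 3) with hbxdef
  set by' : ℝ → ℝ := fun u => cl (4*u) - cl (4*u - 2) with hbydef
  set β : ℝ → ℝ × ℝ := fun t => (bx (cl t), by' (cl t)) with hβdef
  have hβc : Continuous β := by
    apply Continuous.prodMk
    · exact ((hclc.comp (continuous_const.sub (continuous_const.mul continuous_id))).add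
        (hclc.comp ((continuous_const.mul continuous_id).sub continuous_const))).comp hclc
    · exact ((hclc.comp (continuous_const.mul continuous_id)).sub
        (hclc.comp ((continuous_const.mul continuous_id).sub continuous_const))).comp hclc
  have hseg1 : ∀ u, 0 ≤ u → u ≤ 1/4 → bx u = 1 ∧ by' u = 4*u := by
    intro u h0 h1
    constructor
    · rw [hbxdef]; simp only
      rw [hcl_hi _ (by linarith), hcl_lo _ (by linarith)]; ring
    · rw [hbydef]; simp only
      rw [hcl_eval _ (by linarith) (by linarith), hcl_lo _ (by linarith)]; ring
  have hseg2 : ∀ u, 1/4 ≤ u → u ≤ 1/2 → bx u = 2 - 4*u ∧ by' u = 1 := by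
    intro u h0 h1
    constructor
    · rw [hbxdef]; simp only
      rw [hcl_eval _ (by linarith) (by linarith), hcl_lo _ (by linarith)]; ring
    · rw [hbydef]; simp only
      rw [hcl_hi _ (by linarith), hcl_lo _ (by linarith)]; ring
  have hseg3 : ∀ u, 1/2 ≤ u → u ≤ 3/4 → bx u = 0 ∧ by' u = 3 - 4*u := by
    intro u h0 h1
    constructor
    · rw [hbxdef]; simp only
      rw [hcl_lo _ (by linarith), hcl_lo _ (by linarith)]; ring
    · rw [hbydef]; simp only
      rw [hcl_hi _ (by linarith), hcl_eval _ (by linarith) (by linarith)]; ring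
  have hseg4 : ∀ u, 3/4 ≤ u → u ≤ 1 → bx u = 4*u - 3 ∧ by' u = 0 := by
    intro u h0 h1
    constructor
    · rw [hbxdef]; simp only
      rw [hcl_lo _ (by linarith), hcl_eval _ (by linarith) (by linarith)]; ring
    · rw [hbydef]; simp only
      rw [hcl_hi _ (by linarith), hcl_hi _ (by linarith)]; ring
  have hβmem : ∀ t, β t ∈ Icc (0:ℝ) 1 ×ˢ Icc (0:ℝ) 1 := by
    intro t
    have hu := hclmem t
    have hsplit : (β t).1 = bx (cl t) ∧ (β t).2 = by' (cl t) := by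
      rw [hβdef]; exact ⟨rfl, rfl⟩
    constructor
    · rw [hsplit.1]
      rcases le_or_gt (cl t) (1/4) with h | h
      · rw [(hseg1 _ hu.1 h).1]; constructor <;> norm_num
      · rcases le_or_gt (cl t) (1/2) with h2 | h2
        · rw [(hseg2 _ (le_of_lt h) h2).1]; constructor <;> linarith
        · rcases le_or_gt (cl t) (3/4) with h3 | h3
          · rw [(hseg3 _ (le_of_lt h2) h3).1]; constructor <;> norm_num
          · rw [(hseg4 _ (le_of_lt h3) hu.2).1]; constructor <;> linarith [hu.2]
    · rw [hsplit.2]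
      rcases le_or_gt (cl t) (1/4) with h | h
      · rw [(hseg1 _ hu.1 h).2]; constructor <;> [linarith [hu.1]; linarith]
      · rcases le_or_gt (cl t) (1/2) with h2 | h2
        · rw [(hseg2 _ (le_of_lt h) h2).2]; constructor <;> norm_num
        · rcases le_or_gt (cl t) (3/4) with h3 | h3
          · rw [(hseg3 _ (le_of_lt h2) h3).2]; constructor <;> linarith
          · rw [(hseg4 _ (le_of_lt h3) hu.2).2]; constructor <;> norm_num
  have hβloop : β 0 = β 1 := by
    have hc0 : cl 0 = 0 := hcl_lo 0 (le_refl _)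
    have hc1 : cl 1 = 1 := hcl_hi 1 (le_refl _)
    rw [hβdef]
    simp only [hc0, hc1]
    obtain ⟨e1, e2⟩ := hseg1 0 (le_refl _) (by norm_num)
    obtain ⟨e3, e4⟩ := hseg4 1 (by norm_num) (le_refl _)
    rw [e1, e2, e3, e4]
    norm_num
  -- Homotopy 1 : contract the boundary loop to the center inside the square
  set A : ℝ → ℝ → ℝ × ℝ := fun s t =>
    ((1 - cl s) * (1/2) + cl s * (β t).1, (1 - cl s) * (1/2) + cl s * (β t).2) with hAdef
  have hAmem : ∀ s t, A s t ∈ Icc (0:ℝ) 1 ×ˢ Icc (0:ℝ) 1 := by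
    intro s t
    have hs := hclmem s
    have ht1 := (hβmem t).1
    have ht2 := (hβmem t).2
    have e1 : (β t).1 = bx (cl t) := by rw [hβdef]
    have e2 : (β t).2 = by' (cl t) := by rw [hβdef]
    rw [e1] at ht1
    rw [e2] at ht2
    constructor
    · exact convex_half_mem hs ht1
    · exact convex_half_mem hs ht2
  set G₁ : ℝ → ℝ → ℂ := fun s t => Φ (A s t) with hG₁def
  have hG₁c : Continuous fun p : ℝ × ℝ => G₁ p.1 p.2 := by
    apply hΦc.comp
    apply Continuous.prodMk
    · exact ((continuous_const.sub (hclc.comp continuous_fst)).mul continuous_const).add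
        ((hclc.comp continuous_fst).mul ((continuous_fst.comp hβc).comp continuous_snd))
    · exact ((continuous_const.sub (hclc.comp continuous_fst)).mul continuous_const).add
        ((hclc.comp continuous_fst).mul ((continuous_snd.comp hβc).comp continuous_snd))
  have hG₁0 : ∀ s ∈ Icc (0:ℝ) 1, ∀ t ∈ Icc (0:ℝ) 1, G₁ s t ≠ 0 := by
    intro s _ t _
    rw [hG₁def]
    exact hΦ0 _ (hAmem s t)
  have hG₁loop : ∀ s ∈ Icc (0:ℝ) 1, G₁ s 0 = G₁ s 1 := by
    intro s _
    show Φ (A s 0) = Φ (A s 1)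
    congr 1
    show ((1 - cl s) * (1/2) + cl s * (β 0).1, (1 - cl s) * (1/2) + cl s * (β 0).2)
       = ((1 - cl s) * (1/2) + cl s * (β 1).1, (1 - cl s) * (1/2) + cl s * (β 1).2)
    rw [hβloop]
  -- lift of the constant loop G₁ 0
  have hmemc : ((1:ℝ)/2, (1:ℝ)/2) ∈ Icc (0:ℝ) 1 ×ˢ Icc (0:ℝ) 1 := by
    constructor <;> constructor <;> norm_num
  have hG₁0eq : ∀ t, G₁ 0 t = Φ (1/2, 1/2) := by
    intro t
    rw [hG₁def]
    simp only [hAdef, hcl_lo 0 (le_refl _)]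
    norm_num
  have hℓconst : IsLiftOn (G₁ 0) (fun _ => Complex.log (Φ (1/2, 1/2))) := by
    constructor
    · exact continuousOn_const
    · intro t _
      rw [hG₁0eq t, Complex.exp_log (hΦ0 _ hmemc)]
  -- lift of the boundary loop L = G₁ 1
  have hG₁1c : Continuous (G₁ 1) := hG₁c.comp (Continuous.prodMk_right 1)
  obtain ⟨ℓL, hℓL⟩ := lift_exists (G₁ 1) hG₁1c
    (fun t ht => hG₁0 1 ⟨zero_le_one, le_refl _⟩ t ht)
  have hgapL : ℓL 1 - ℓL 0 = 0 := by
    have := homotopy_gap G₁ hG₁c hG₁0 hG₁loop hℓconst hℓL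
    rw [this]; ring
  -- the standard circle loop
  set ci : ℝ → ℂ := fun t => Complex.exp (((2 * Real.pi * t : ℝ) : ℂ) * Complex.I) with hcidef
  have hcic : Continuous ci := by
    apply Complex.continuous_exp.comp
    exact (Complex.continuous_ofReal.comp
      ((continuous_const.mul continuous_id))).mul continuous_const
  have hcine : ∀ t, ci t ≠ 0 := fun t => Complex.exp_ne_zero _
  have hcire : ∀ t : ℝ, (ci t).re = Real.cos (2 * Real.pi * t) := by
    intro t
    rw [hcidef]
    exact Complex.exp_ofReal_mul_I_re _
  have hciim : ∀ t : ℝ, (ci t).im = Real.sin (2 * Real.pi * t) := by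
    intro t
    rw [hcidef]
    exact Complex.exp_ofReal_mul_I_im _
  have hciloop : ci 0 = ci 1 := by
    show Complex.exp (((2 * Real.pi * 0 : ℝ) : ℂ) * Complex.I)
       = Complex.exp (((2 * Real.pi * 1 : ℝ) : ℂ) * Complex.I)
    rw [show ((2 * Real.pi * 0 : ℝ) : ℂ) = 0 by push_cast; ring,
        show ((2 * Real.pi * 1 : ℝ) : ℂ) * Complex.I = 2 * (Real.pi:ℂ) * Complex.I by
          push_cast; ring]
    rw [zero_mul, Complex.exp_zero, Complex.exp_two_pi_mul_I]
  -- Homotopy 2 : between the boundary loop and the circle loop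
  set H : ℝ → ℝ → ℂ := fun s t =>
    ((1 - cl s : ℝ) : ℂ) * (G₁ 1 t) + ((cl s : ℝ) : ℂ) * ci t with hHdef
  have hHc : Continuous fun p : ℝ × ℝ => H p.1 p.2 := by
    apply Continuous.add
    · exact (Complex.continuous_ofReal.comp
        (continuous_const.sub (hclc.comp continuous_fst))).mul
        ((hG₁1c.comp continuous_snd))
    · exact (Complex.continuous_ofReal.comp (hclc.comp continuous_fst)).mul
        (hcic.comp continuous_snd)
  have hπ : (0:ℝ) < Real.pi := Real.pi_pos
  have hH0 : ∀ s ∈ Icc (0:ℝ) 1, ∀ t ∈ Icc (0:ℝ) 1, H s t ≠ 0 := by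
    intro s hs t ht
    have hcls : cl s = s := hcl_eval s hs.1 hs.2
    have hclt : cl t = t := hcl_eval t ht.1 ht.2
    have hL : G₁ 1 t = Φ (β t) := by
      rw [hG₁def]
      simp only [hAdef, hcl_hi 1 (le_refl _)]
      norm_num
    rw [hHdef]
    simp only [hcls]
    rcases le_or_gt t (1/4) with h14 | h14
    · -- right edge : Re Φ > 0, Re ci ≥ 0
      obtain ⟨e1, e2⟩ := hseg1 t ht.1 h14
      have hβt : β t = (1, 4*t) := by
        rw [hβdef]; simp only [hclt]; rw [e1, e2]
      have hzre : 0 < (G₁ 1 t).re := by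
        rw [hL, hβt, hΦre]
        exact hright (4*t) ⟨by linarith [ht.1], by linarith⟩
      have hwre : 0 ≤ (ci t).re := by
        rw [hcire]
        apply Real.cos_nonneg_of_mem_Icc
        constructor
        · nlinarith [ht.1]
        · nlinarith
      exact comb_ne_re hzre hwre (hcine t) hs.1 hs.2
    · rcases le_or_gt t (1/2) with h12 | h12
      · -- top edge : Im Φ > 0, Im ci ≥ 0
        obtain ⟨e1, e2⟩ := hseg2 t (le_of_lt h14) h12
        have hβt : β t = (2 - 4*t, 1) := by
          rw [hβdef]; simp only [hclt]; rw [e1, e2]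
        have hzim : 0 < (G₁ 1 t).im := by
          rw [hL, hβt, hΦim]
          exact htop (2 - 4*t) ⟨by linarith, by linarith⟩
        have hwim : 0 ≤ (ci t).im := by
          rw [hciim]
          apply Real.sin_nonneg_of_nonneg_of_le_pi
          · nlinarith [ht.1]
          · nlinarith
        exact comb_ne_im hzim hwim (hcine t) hs.1 hs.2
      · rcases le_or_gt t (3/4) with h34 | h34
        · -- left edge : Re Φ < 0, Re ci ≤ 0
          obtain ⟨e1, e2⟩ := hseg3 t (le_of_lt h12) h34
          have hβt : β t = (0, 3 - 4*t) := by
            rw [hβdef]; simp only [hclt]; rw [e1, e2]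
          have hzre : (G₁ 1 t).re < 0 := by
            rw [hL, hβt, hΦre]
            exact hleft (3 - 4*t) ⟨by linarith, by linarith⟩
          have hwre : (ci t).re ≤ 0 := by
            rw [hcire]
            apply Real.cos_nonpos_of_pi_div_two_le_of_le
            · nlinarith
            · nlinarith [ht.2]
          exact comb_ne_re_neg hzre hwre (hcine t) hs.1 hs.2
        · -- bottom edge : Im Φ < 0, Im ci ≤ 0
          obtain ⟨e1, e2⟩ := hseg4 t (le_of_lt h34) ht.2
          have hβt : β t = (4*t - 3, 0) := by
            rw [hβdef]; simp only [hclt]; rw [e1, e2]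
          have hzim : (G₁ 1 t).im < 0 := by
            rw [hL, hβt, hΦim]
            exact hbot (4*t - 3) ⟨by linarith, by linarith [ht.2]⟩
          have hwim : (ci t).im ≤ 0 := by
            rw [hciim]
            rw [← Real.sin_sub_two_pi]
            apply Real.sin_nonpos_of_nonpos_of_neg_pi_le
            · nlinarith [ht.2]
            · nlinarith
          exact comb_ne_im_neg hzim hwim (hcine t) hs.1 hs.2
  have hHloop : ∀ s ∈ Icc (0:ℝ) 1, H s 0 = H s 1 := by
    intro s hs
    rw [hHdef]
    simp only [hciloop, hG₁loop 1 ⟨zero_le_one, le_refl _⟩]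
  have hH0lift : IsLiftOn (H 0) ℓL := by
    constructor
    · exact hℓL.1
    · intro t ht
      rw [hℓL.2 t ht, hHdef]
      simp only [hcl_lo 0 (le_refl _)]
      push_cast
      ring
  have hH1lift : IsLiftOn (H 1) (fun t => ((2 * Real.pi * t : ℝ) : ℂ) * Complex.I) := by
    constructor
    · apply Continuous.continuousOn
      exact (Complex.continuous_ofReal.comp (continuous_const.mul continuous_id)).mul
        continuous_const
    · intro t ht
      rw [hHdef]
      simp only [hcl_hi 1 (le_refl _)]
      rw [hcidef]
      push_cast
      ring
  have hfinal := homotopy_gap H hHc hH0 hHloop hH0lift hH1lift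
  rw [hgapL] at hfinal
  have : ((2 * Real.pi * 1 : ℝ) : ℂ) * Complex.I - ((2 * Real.pi * 0 : ℝ) : ℂ) * Complex.I
      = ((2 * Real.pi : ℝ) : ℂ) * Complex.I := by push_cast; ring
  rw [this] at hfinal
  have him := congrArg Complex.im hfinal
  simp at him

end SCLD

end SCLD

/-- A simple (injective) loop on the cylinder `S¹ × ℝ` has degree `0`, `1` or `−1` around the
periodic direction: `|n| ≤ 1`, where `n` is the degree of its projection to `S¹`. -/
theorem simple_cylinder_loop_degree (γ : AddCircle (1:ℝ) → AddCircle (1:ℝ) × ℝ)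
    (hcont : Continuous γ) (hinj : Function.Injective γ)
    (n : ℤ) (F : ℝ → ℝ) (hF : Continuous F)
    (hlift : ∀ t : ℝ, ((F t : AddCircle (1:ℝ))) = (γ (t : AddCircle (1:ℝ))).1)
    (hdeg : ∀ t : ℝ, F (t + 1) = F t + n) :
    |n| ≤ 1 := by
  by_contra hn'
  push_neg at hn'
  -- the height function
  set h : ℝ → ℝ := fun t => (γ (t : AddCircle (1:ℝ))).2 with hhdef
  have hcoe : Continuous fun t : ℝ => (t : AddCircle (1:ℝ)) := AddCircle.continuous_mk' 1
  have hγℝ : Continuous fun t : ℝ => γ (t : AddCircle (1:ℝ)) := hcont.comp hcoe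
  have hh : Continuous h := continuous_snd.comp hγℝ
  have hper : ∀ x : ℝ, h (x + 1) = h x := by
    intro x
    rw [hhdef]
    simp only
    rw [AddCircle.coe_add_period]
  have hPer : Function.Periodic h 1 := hper
  -- the key injectivity consequence
  have injkey : ∀ v c : ℝ, ∀ k : ℤ, F (v + c) - F v = (k:ℝ) → h (v + c) = h v →
      ∃ m : ℤ, c = (m:ℝ) := by
    intro v c k hk hheq
    have h1 : ((F (v+c) : ℝ) : AddCircle (1:ℝ)) = ((F v : ℝ) : AddCircle (1:ℝ)) := by
      rw [QuotientAddGroup.eq_iff_sub_mem]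
      rw [AddSubgroup.mem_zmultiples_iff]
      exact ⟨k, by rw [zsmul_eq_mul, mul_one]; exact hk.symm⟩
    have h2 : (γ (((v+c) : ℝ) : AddCircle (1:ℝ))).1 = (γ ((v : ℝ) : AddCircle (1:ℝ))).1 := by
      rw [← hlift, ← hlift, h1]
    have h3 : γ (((v+c) : ℝ) : AddCircle (1:ℝ)) = γ ((v : ℝ) : AddCircle (1:ℝ)) :=
      Prod.ext h2 hheq
    have h4 := hinj h3
    rw [QuotientAddGroup.eq_iff_sub_mem, AddSubgroup.mem_zmultiples_iff] at h4
    obtain ⟨m, hm⟩ := h4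
    rw [zsmul_eq_mul, mul_one] at hm
    exact ⟨m, by linarith⟩
  -- the final contradiction from a coincidence point
  have final : ∀ v c : ℝ, c ∈ Icc (0:ℝ) 1 → h (v + c) = h v → ∀ k : ℤ,
      (k = 1 ∨ k = -1) → F (v + c) - F v = (k:ℝ) → False := by
    intro v c hc hheq k hk hFk
    obtain ⟨m, hm⟩ := injkey v c k hFk hheq
    have hm0 : 0 ≤ m := by
      have : ((0:ℤ):ℝ) ≤ (m:ℝ) := by rw [← hm]; exact_mod_cast hc.1
      exact_mod_cast this
    have hm1 : m ≤ 1 := by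
      have : (m:ℝ) ≤ ((1:ℤ):ℝ) := by rw [← hm]; exact_mod_cast hc.2
      exact_mod_cast this
    interval_cases m
    · rw [hm] at hFk
      simp only [Int.cast_zero, add_zero, sub_self] at hFk
      have : (k:ℝ) = 0 := hFk.symm
      have : k = 0 := by exact_mod_cast this
      omega
    · rw [hm] at hFk
      rw [show ((1:ℤ):ℝ) = (1:ℝ) by norm_num] at hFk
      rw [hdeg v] at hFk
      have : (n:ℝ) = (k:ℝ) := by linarith
      have : n = k := by exact_mod_cast this
      rcases abs_cases n with ⟨ha1, ha2⟩ | ⟨ha1, ha2⟩ <;> omega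
  -- global max of h
  obtain ⟨v₀, hv₀mem, hv₀max'⟩ := isCompact_Icc.exists_isMaxOn
    (nonempty_Icc.mpr zero_le_one) hh.continuousOn
  have hfract : ∀ x : ℝ, h (Int.fract x) = h x := by
    intro x
    have h1 := hPer.sub_int_mul_eq (x := x) (n := ⌊x⌋)
    have h2 : x - (⌊x⌋ : ℝ) * 1 = Int.fract x := by rw [mul_one, Int.self_sub_floor]
    rwa [h2] at h1
  have hmax : ∀ x, h x ≤ h v₀ := by
    intro x
    rw [← hfract x]
    exact hv₀max' ⟨Int.fract_nonneg x, le_of_lt (Int.fract_lt_one x)⟩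
  -- global min of h on a period starting at v₀
  obtain ⟨w₁, hw₁mem, hw₁min'⟩ := isCompact_Icc.exists_isMinOn
    (nonempty_Icc.mpr (by linarith : v₀ ≤ v₀ + 1)) hh.continuousOn
  have hw₁glob : ∀ x, h w₁ ≤ h x := by
    intro x
    have h1 := hPer.sub_int_mul_eq (x := x) (n := ⌊x - v₀⌋)
    have e : Int.fract (x - v₀) = (x - v₀) - (⌊x - v₀⌋:ℝ) := (Int.self_sub_floor _).symm
    have hmem : x - (⌊x - v₀⌋ : ℝ) * 1 ∈ Icc v₀ (v₀ + 1) := by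
      have e0 := Int.fract_nonneg (x - v₀)
      have e1 := Int.fract_lt_one (x - v₀)
      rw [e] at e0 e1
      constructor <;> [linarith; linarith]
    calc h w₁ ≤ h (x - (⌊x - v₀⌋ : ℝ) * 1) := hw₁min' hmem
    _ = h x := h1
  -- choice of the min point in the open period interval
  obtain ⟨w₀, hw₀1, hw₀2, hw₀glob⟩ : ∃ w, v₀ < w ∧ w < v₀ + 1 ∧ ∀ x, h w ≤ h x := by
    rcases eq_or_lt_of_le (hw₁glob v₀) with heq | hlt
    · refine ⟨v₀ + 1/2, by linarith, by linarith, ?_⟩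
      intro x
      have h1 := hmax (v₀ + 1/2)
      have h2 := hw₁glob x
      linarith
    · have e1 : w₁ ≠ v₀ := by
        intro he; rw [he] at hlt; exact lt_irrefl _ hlt
      have e2 : w₁ ≠ v₀ + 1 := by
        intro he
        rw [he, hper v₀] at hlt
        exact lt_irrefl _ hlt
      exact ⟨w₁, lt_of_le_of_ne hw₁mem.1 (Ne.symm e1), lt_of_le_of_ne hw₁mem.2 e2, hw₁glob⟩
  have hvw : 0 < w₀ - v₀ := by linarith
  -- the sign
  set σℤ : ℤ := if 0 ≤ n then 1 else -1 with hσdef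
  have hσn : 2 ≤ σℤ * n := by
    rw [hσdef]
    rcases abs_cases n with ⟨h1, h2⟩ | ⟨h1, h2⟩
    · rw [if_pos (by omega)]; omega
    · rw [if_neg (by omega)]; omega
  have hσ1 : σℤ = 1 ∨ σℤ = -1 := by
    rw [hσdef]; split_ifs <;> [left; right] <;> rfl
  set σ : ℝ := (σℤ : ℝ) with hσℝ
  have hσsq : σ * σ = 1 := by
    rcases hσ1 with he | he <;> rw [hσℝ, he] <;> norm_num
  -- the rescaling map
  set X : ℝ → ℝ := fun x => v₀ + x * (w₀ - v₀) with hXdef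
  have hXc : Continuous X := continuous_const.add (continuous_id.mul continuous_const)
  have hX0 : X 0 = v₀ := by rw [hXdef]; simp
  have hX1 : X 1 = w₀ := by rw [hXdef]; simp
  have hXmem : ∀ x ∈ Icc (0:ℝ) 1, X x ∈ Icc v₀ w₀ := by
    intro x hx
    constructor
    · rw [hXdef]
      simp only
      nlinarith [hx.1]
    · rw [hXdef]
      simp only
      nlinarith [hx.2]
  -- Poincaré–Miranda approximate points
  have hPM : ∀ ε : ℝ, 0 < ε → ∃ r : ℝ × ℝ, r ∈ Icc v₀ w₀ ×ˢ Icc (0:ℝ) 1 ∧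
      F (r.1 + r.2) - F r.1 = σ ∧ |h (r.1 + r.2) - h r.1| ≤ ε := by
    intro ε hε
    set fpm : ℝ × ℝ → ℝ := fun p => (h (X p.1 + p.2) - h (X p.1)) + ε * (2 * p.1 - 1)
      with hfpm
    set gpm : ℝ × ℝ → ℝ := fun p => σ * (F (X p.1 + p.2) - F (X p.1)) - 1 with hgpm
    have hfc : Continuous fpm := by
      apply Continuous.add
      · exact (hh.comp ((hXc.comp continuous_fst).add continuous_snd)).sub
          (hh.comp (hXc.comp continuous_fst))
      · exact continuous_const.mul ((continuous_const.mul continuous_fst).sub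
          continuous_const)
    have hgc : Continuous gpm := by
      apply Continuous.sub
      · exact continuous_const.mul ((hF.comp ((hXc.comp continuous_fst).add
          continuous_snd)).sub (hF.comp (hXc.comp continuous_fst)))
      · exact continuous_const
    have hleft' : ∀ y ∈ Icc (0:ℝ) 1, fpm (0, y) < 0 := by
      intro y _
      have e : fpm (0, y) = (h (v₀ + y) - h v₀) - ε := by
        rw [hfpm]
        simp only [hX0]
        ring
      rw [e]
      have := hmax (v₀ + y)
      linarith
    have hright' : ∀ y ∈ Icc (0:ℝ) 1, 0 < fpm (1, y) := by
      intro y _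
      have e : fpm (1, y) = (h (w₀ + y) - h w₀) + ε := by
        rw [hfpm]
        simp only [hX1]
        ring
      rw [e]
      have := hw₀glob (w₀ + y)
      linarith
    have hbot' : ∀ x ∈ Icc (0:ℝ) 1, gpm (x, 0) < 0 := by
      intro x _
      have e : gpm (x, 0) = -1 := by
        rw [hgpm]
        simp only [add_zero, sub_self, mul_zero]
        ring
      rw [e]; norm_num
    have htop' : ∀ x ∈ Icc (0:ℝ) 1, 0 < gpm (x, 1) := by
      intro x _
      have e : gpm (x, 1) = σ * n - 1 := by
        rw [hgpm]
        simp only [hdeg (X x)]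
        ring
      rw [e]
      have : (2:ℝ) ≤ σ * n := by
        rw [hσℝ]
        have : ((2:ℤ):ℝ) ≤ ((σℤ * n : ℤ):ℝ) := by exact_mod_cast hσn
        push_cast at this
        linarith
      linarith
    obtain ⟨p, hpmem, hf0, hg0⟩ := SCLD.poincare_miranda fpm gpm hfc hgc hleft' hright' hbot' htop'
    refine ⟨(X p.1, p.2), ⟨hXmem p.1 hpmem.1, hpmem.2⟩, ?_, ?_⟩
    · -- F equation
      have e : σ * (F (X p.1 + p.2) - F (X p.1)) = 1 := by
        rw [hgpm] at hg0
        simp only at hg0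
        linarith
      have := congrArg (fun z => σ * z) e
      rw [← mul_assoc, hσsq, one_mul, mul_one] at this
      exact this
    · -- h estimate
      have e : h (X p.1 + p.2) - h (X p.1) = -(ε * (2 * p.1 - 1)) := by
        rw [hfpm] at hf0
        simp only at hf0
        linarith
      rw [e, abs_neg, abs_mul, abs_of_pos hε]
      have h1 : |2 * p.1 - 1| ≤ 1 := by
        rw [abs_le]
        constructor <;> [linarith [hpmem.1.1]; linarith [hpmem.1.2]]
      nlinarith [abs_nonneg (2 * p.1 - 1)]
  -- compactness
  set S : ℕ → Set (ℝ × ℝ) := fun k =>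
    (Icc v₀ w₀ ×ˢ Icc (0:ℝ) 1) ∩ {r | F (r.1 + r.2) - F r.1 = σ} ∩
      {r | |h (r.1 + r.2) - h r.1| ≤ 1/(k+1)} with hSdef
  have hScl : ∀ k, IsClosed (S k) := by
    intro k
    apply IsClosed.inter
    · apply IsClosed.inter
      · exact (isClosed_Icc.prod isClosed_Icc)
      · apply isClosed_eq _ continuous_const
        exact (hF.comp (continuous_fst.add continuous_snd)).sub (hF.comp continuous_fst)
    · apply isClosed_le _ continuous_const
      exact ((hh.comp (continuous_fst.add continuous_snd)).sub
        (hh.comp continuous_fst)).abs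
  have hSne : ∀ k : ℕ, (S k).Nonempty := by
    intro k
    have hε : (0:ℝ) < 1/(k+1) := by positivity
    obtain ⟨r, hr1, hr2, hr3⟩ := hPM (1/(k+1)) hε
    exact ⟨r, ⟨⟨hr1, hr2⟩, hr3⟩⟩
  have hSmono : ∀ k : ℕ, S (k+1) ⊆ S k := by
    intro k r hr
    refine ⟨hr.1, ?_⟩
    have h1 : (1:ℝ)/(k+1+1) ≤ 1/(k+1) := by
      apply one_div_le_one_div_of_le
      · positivity
      · push_cast; linarith
    have := hr.2
    simp only [Set.mem_setOf_eq] at this ⊢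
    calc |h (r.1 + r.2) - h r.1| ≤ 1/((k:ℝ)+1+1) := by exact_mod_cast this
    _ ≤ 1/((k:ℝ)+1) := h1
  have hS0c : IsCompact (S 0) :=
    (isCompact_Icc.prod isCompact_Icc).of_isClosed_subset (hScl 0)
      (fun r hr => hr.1.1)
  obtain ⟨r, hr⟩ := IsCompact.nonempty_iInter_of_sequence_nonempty_isCompact_isClosed
    S hSmono hSne hS0c hScl
  have hrmem : ∀ k : ℕ, r ∈ S k := fun k => Set.mem_iInter.mp hr k
  have hrprod := (hrmem 0).1.1
  have hrF : F (r.1 + r.2) - F r.1 = σ := (hrmem 0).1.2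
  have hrh : h (r.1 + r.2) = h r.1 := by
    have habs : |h (r.1 + r.2) - h r.1| = 0 := by
      by_contra hne
      have hpos : 0 < |h (r.1 + r.2) - h r.1| :=
        lt_of_le_of_ne (abs_nonneg _) (Ne.symm hne)
      obtain ⟨k, hk⟩ := exists_nat_one_div_lt hpos
      have := (hrmem k).2
      simp only [Set.mem_setOf_eq] at this
      have hcast : |h (r.1 + r.2) - h r.1| ≤ 1/((k:ℝ)+1) := by exact_mod_cast this
      linarith
    have := abs_eq_zero.mp habs
    linarith
  exact final r.1 r.2 hrprod.2 hrh σℤ hσ1 hrF
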